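/- Let F be a field of characteristic p > 0 and β ∈ F^× not a p-th power. Then the polynomial t^p − β(x^p − β)^p ∈ F[x,t] is irreducible, and the quotient ring R' = F[x,t]/(t^p − β(x^p − β)^p) embeds into F̃[u] (where F̃ = F(β^{1/p})) via x ↦ β^{1/p} + u, t ↦ β^{1/p} u^p; this embedding becomes an isomorphism after inverting s = x^p − β, identifying the normalization of R' with F̃[u]. -/

import Mathlib

set_option maxRecDepth 10000
set_option maxHeartbeats 1000000

noncomputable section

/-- The polynomial `t^p − β(x^p − β)^p ∈ F[x,t]`, with `x = X 0` and `t = X 1`. -/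
def peculiarPoly (F : Type*) [Field F] (p : ℕ) (β : F) : MvPolynomial (Fin 2) F :=
  MvPolynomial.X 1 ^ p -
    MvPolynomial.C β * (MvPolynomial.X 0 ^ p - MvPolynomial.C β) ^ p

/-- The `F`-algebra map `F[x,t] → F̃[u]` given by `x ↦ β^{1/p} + u`, `t ↦ β^{1/p}·u^p`,
where `F̃ = F(α)` with `α = β^{1/p}`. -/
def peculiarEval (F K : Type*) [Field F] [Field K] [Algebra F K] (p : ℕ) (α : K) :
    MvPolynomial (Fin 2) F →ₐ[F] Polynomial K :=
  MvPolynomial.aeval (fun i : Fin 2 =>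
    if i = 0 then Polynomial.C α + Polynomial.X else Polynomial.C α * Polynomial.X ^ p)

open Polynomial

section Aux

variable (F K : Type*) [Field F] [Field K] [Algebra F K] (p : ℕ) (β : F) (α : K)

/-- `F[x] → K[u]`, `q ↦ q(α + u)`. -/
def pecPsi0 : Polynomial F →+* Polynomial K :=
  eval₂RingHom (C.comp (algebraMap F K)) (C α + X)

/-- `F[x][t] → K[u]`, `t ↦ α u^p`, coefficients via `pecPsi0`. -/
def pecPsi : Polynomial (Polynomial F) →+* Polynomial K :=
  eval₂RingHom (pecPsi0 F K α) (C α * X ^ p)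

/-- The image of `peculiarPoly` in `F[x][t]` with `t` the outer variable. -/
def pecFF : Polynomial (Polynomial F) :=
  X ^ p - C (Polynomial.C β * (X ^ p - Polynomial.C β) ^ p)

/-- `F[x,t] ≃ F[x][t]`, `X 0 ↦ C X`, `X 1 ↦ X`. -/
def pecPhi : MvPolynomial (Fin 2) F ≃ₐ[F] Polynomial (Polynomial F) :=
  ((MvPolynomial.renameEquiv F (Equiv.swap (0 : Fin 2) 1)).trans
    (MvPolynomial.finSuccEquiv F 1)).trans
    (Polynomial.mapAlgEquiv ((MvPolynomial.finSuccEquiv F 0).trans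
      (Polynomial.mapAlgEquiv (MvPolynomial.isEmptyAlgEquiv F (Fin 0)))))

variable {F K p β α}

lemma pecPhi_X0 : pecPhi F (MvPolynomial.X 0) = C X := by
  rw [pecPhi, AlgEquiv.trans_apply, AlgEquiv.trans_apply, MvPolynomial.renameEquiv_apply,
    MvPolynomial.rename_X, show Equiv.swap (0 : Fin 2) 1 0 = ((0 : Fin 1).succ) from rfl,
    MvPolynomial.finSuccEquiv_X_succ]
  simp only [Polynomial.coe_mapAlgEquiv, Polynomial.map_C]
  have h3 : ((MvPolynomial.finSuccEquiv F 0).trans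
      (Polynomial.mapAlgEquiv (MvPolynomial.isEmptyAlgEquiv F (Fin 0))))
      (MvPolynomial.X 0) = X := by
    rw [AlgEquiv.trans_apply, MvPolynomial.finSuccEquiv_X_zero]
    simp only [Polynomial.coe_mapAlgEquiv, Polynomial.map_X]
  exact congrArg C h3

lemma pecPhi_X1 : pecPhi F (MvPolynomial.X 1) = X := by
  rw [pecPhi, AlgEquiv.trans_apply, AlgEquiv.trans_apply, MvPolynomial.renameEquiv_apply,
    MvPolynomial.rename_X, show Equiv.swap (0 : Fin 2) 1 1 = 0 from rfl,
    MvPolynomial.finSuccEquiv_X_zero]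
  simp only [Polynomial.coe_mapAlgEquiv, Polynomial.map_X]

lemma pecPhi_C (a : F) : pecPhi F (MvPolynomial.C a) = C (Polynomial.C a) := by
  rw [← MvPolynomial.algebraMap_eq, AlgEquiv.commutes, Polynomial.algebraMap_apply,
    Polynomial.algebraMap_apply]
  simp

lemma pecPsi0_C (a : F) : pecPsi0 F K α (Polynomial.C a) = C (algebraMap F K a) :=
  eval₂_C _ _

lemma pecPsi0_X : pecPsi0 F K α X = C α + X := eval₂_X _ _

lemma pecPsi_C (q : Polynomial F) : pecPsi F K p α (C q) = pecPsi0 F K α q :=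
  eval₂_C _ _

lemma pecPsi_X : pecPsi F K p α X = C α * X ^ p := eval₂_X _ _

lemma peculiarEval_eq (r : MvPolynomial (Fin 2) F) :
    peculiarEval F K p α r = pecPsi F K p α (pecPhi F r) := by
  have h : ((peculiarEval F K p α : MvPolynomial (Fin 2) F →ₐ[F] Polynomial K) :
      MvPolynomial (Fin 2) F →+* Polynomial K) =
      (pecPsi F K p α).comp (pecPhi F : MvPolynomial (Fin 2) F →+* Polynomial (Polynomial F)) := by
    apply MvPolynomial.ringHom_ext
    · intro a
      show peculiarEval F K p α (MvPolynomial.C a) =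
        pecPsi F K p α (pecPhi F (MvPolynomial.C a))
      rw [pecPhi_C, pecPsi_C, pecPsi0_C, peculiarEval, MvPolynomial.aeval_C,
        Polynomial.algebraMap_apply]
    · intro i
      fin_cases i
      · show peculiarEval F K p α (MvPolynomial.X 0) =
          pecPsi F K p α (pecPhi F (MvPolynomial.X 0))
        rw [pecPhi_X0, pecPsi_C, pecPsi0_X, peculiarEval, MvPolynomial.aeval_X]
        simp
      · show peculiarEval F K p α (MvPolynomial.X 1) =
          pecPsi F K p α (pecPhi F (MvPolynomial.X 1))
        rw [pecPhi_X1, pecPsi_X, peculiarEval, MvPolynomial.aeval_X]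
        simp
  exact RingHom.congr_fun h r

lemma pecPhi_peculiarPoly : pecPhi F (peculiarPoly F p β) = pecFF F p β := by
  rw [peculiarPoly, pecFF, map_sub, map_pow, map_mul, map_pow, map_sub, map_pow,
    pecPhi_X0, pecPhi_X1, pecPhi_C, ← Polynomial.C_pow, ← Polynomial.C_sub,
    ← Polynomial.C_pow, ← Polynomial.C_mul]

variable [Fact p.Prime] [CharP F p]

lemma pecPsi0_X_pow_sub_C (hα : α ^ p = algebraMap F K β) :
    pecPsi0 F K α (X ^ p - Polynomial.C β) = X ^ p := by
  haveI : CharP K p := charP_of_injective_algebraMap (algebraMap F K).injective p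
  haveI : CharP (Polynomial K) p := inferInstance
  rw [map_sub, map_pow, pecPsi0_X, pecPsi0_C, add_pow_char, ← C_pow, hα]
  ring

lemma pecPsi_FF (hα : α ^ p = algebraMap F K β) : pecPsi F K p α (pecFF F p β) = 0 := by
  rw [pecFF, map_sub, map_pow, pecPsi_X, pecPsi_C, map_mul, map_pow,
    pecPsi0_X_pow_sub_C hα, pecPsi0_C, mul_pow, ← C_pow, hα]
  ring

lemma pecPsi0_comp_eq (q : Polynomial F) :
    pecPsi0 F K α q = (q.map (algebraMap F K)).comp (C α + X) := by
  rw [Polynomial.comp, eval₂_map]; rfl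

lemma pecPsi0_natDegree (q : Polynomial F) :
    (pecPsi0 F K α q).natDegree = q.natDegree := by
  rw [pecPsi0_comp_eq, natDegree_comp,
    natDegree_map_eq_of_injective (algebraMap F K).injective]
  simp [add_comm (C α) X]

lemma pecPsi0_leadingCoeff (q : Polynomial F) :
    (pecPsi0 F K α q).leadingCoeff = algebraMap F K q.leadingCoeff := by
  have h1 : (C α + X : Polynomial K).natDegree = 1 := by simp [add_comm (C α) X]
  rw [pecPsi0_comp_eq, leadingCoeff_comp (by rw [h1]; exact one_ne_zero)]
  have h2 : (C α + X : Polynomial K).leadingCoeff = 1 := by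
    rw [add_comm]; exact (monic_X_add_C α).leadingCoeff
  rw [h2, one_pow, mul_one, leadingCoeff_map]

end Aux

section Key

variable {F K : Type*} [Field F] [Field K] [Algebra F K] {p : ℕ} [Fact p.Prime] [CharP F p]
  {β : F} {α : K}

lemma pec_minpoly (hβp : ∀ γ : F, γ ^ p ≠ β) (hα : α ^ p = algebraMap F K β) :
    minpoly F α = X ^ p - C β := by
  have hp : p.Prime := Fact.out
  have hirr : Irreducible (X ^ p - C β : Polynomial F) :=
    X_pow_sub_C_irreducible_of_prime hp hβp
  have haev : Polynomial.aeval α (X ^ p - C β : Polynomial F) = 0 := by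
    simp [hα, Polynomial.algebraMap_apply]
  exact (minpoly.eq_of_irreducible_of_monic hirr haev
    (monic_X_pow_sub_C β hp.ne_zero)).symm

lemma pec_isIntegral (hα : α ^ p = algebraMap F K β) : IsIntegral F α := by
  have hp : p.Prime := Fact.out
  refine ⟨X ^ p - C β, monic_X_pow_sub_C β hp.ne_zero, ?_⟩
  simp [hα, Polynomial.algebraMap_apply]

/-- Key injectivity: a remainder of `t`-degree `< p` mapping to `0` under `pecPsi` is `0`. -/
lemma pec_key (hβp : ∀ γ : F, γ ^ p ≠ β) (hα : α ^ p = algebraMap F K β)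
    (r : Polynomial (Polynomial F)) (hdeg : r.degree < p)
    (h0 : pecPsi F K p α r = 0) : r = 0 := by
  by_contra hne
  have hp : p.Prime := Fact.out
  have hndeg : r.natDegree < p := (natDegree_lt_iff_degree_lt hne).2 hdeg
  have hs : r.support.Nonempty := Polynomial.nonempty_support_iff.2 hne
  set D : ℕ → ℕ := fun j => (r.coeff j).natDegree + p * j with hD
  set d : ℕ := r.support.sup' hs D with hd
  obtain ⟨j0, hj0s, hj0⟩ := Finset.exists_mem_eq_sup' hs D
  have hsum : pecPsi F K p α r =
      ∑ j ∈ r.support, pecPsi0 F K α (r.coeff j) * (C α * X ^ p) ^ j := by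
    rw [pecPsi, coe_eval₂RingHom, eval₂_eq_sum, Polynomial.sum_def]
  have hterm : ∀ j ∈ r.support,
      (pecPsi0 F K α (r.coeff j) * (C α * X ^ p) ^ j).coeff d =
        if D j = d then algebraMap F K (r.coeff j).leadingCoeff * α ^ j else 0 := by
    intro j hj
    have hle : D j ≤ d := Finset.le_sup' D hj
    have hrw : pecPsi0 F K α (r.coeff j) * (C α * X ^ p) ^ j =
        (C (α ^ j) * pecPsi0 F K α (r.coeff j)) * X ^ (p * j) := by
      rw [mul_pow, ← C_pow, ← pow_mul]; ring
    rw [hrw, coeff_mul_X_pow', coeff_C_mul]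
    by_cases hDj : D j = d
    · have hpj : p * j ≤ d := by simp only [hD] at hDj; omega
      have hsub : d - p * j = (r.coeff j).natDegree := by simp only [hD] at hDj; omega
      rw [if_pos hpj, hsub, if_pos hDj]
      have hlead : (pecPsi0 F K α (r.coeff j)).coeff (r.coeff j).natDegree =
          (pecPsi0 F K α (r.coeff j)).leadingCoeff := by
        rw [Polynomial.leadingCoeff, pecPsi0_natDegree]
      rw [hlead, pecPsi0_leadingCoeff, mul_comm]
    · rw [if_neg hDj]
      by_cases hpj : p * j ≤ d
      · rw [if_pos hpj]
        have hlt : (pecPsi0 F K α (r.coeff j)).natDegree < d - p * j := by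
          rw [pecPsi0_natDegree]; simp only [hD] at hDj hle; omega
        rw [Polynomial.coeff_eq_zero_of_natDegree_lt hlt, mul_zero]
      · rw [if_neg hpj]
  have hsum2 : ∑ j ∈ r.support, (pecPsi0 F K α (r.coeff j) * (C α * X ^ p) ^ j).coeff d
      = ∑ j ∈ r.support,
        (if D j = d then algebraMap F K (r.coeff j).leadingCoeff * α ^ j else 0) :=
    Finset.sum_congr rfl hterm
  have hcoeff : (0 : K) =
      ∑ j ∈ r.support.filter (fun j => D j = d),
        algebraMap F K (r.coeff j).leadingCoeff * α ^ j := by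
    have hc0 : Polynomial.coeff (pecPsi F K p α r) d = 0 := by rw [h0]; simp
    rw [hsum, finset_sum_coeff, hsum2, ← Finset.sum_filter] at hc0
    exact hc0.symm
  set g : Polynomial F := ∑ j ∈ r.support.filter (fun j => D j = d),
      C (r.coeff j).leadingCoeff * X ^ j with hg
  have haevg : Polynomial.aeval α g = 0 := by
    rw [hg, map_sum]
    simp only [map_mul, map_pow, Polynomial.aeval_C, Polynomial.aeval_X]
    exact hcoeff.symm
  have hj0d : D j0 = d := by rw [hd]; exact hj0.symm
  have hgj0 : g.coeff j0 = (r.coeff j0).leadingCoeff := by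
    rw [hg, finset_sum_coeff]
    have h1 : ∀ b ∈ Finset.filter (fun j => D j = d) r.support, b ≠ j0 →
        (C (r.coeff b).leadingCoeff * X ^ b).coeff j0 = 0 := by
      intro b _ hbne
      rw [coeff_C_mul, coeff_X_pow, if_neg (Ne.symm hbne), mul_zero]
    have hj0f : j0 ∈ Finset.filter (fun j => D j = d) r.support := by
      rw [Finset.mem_filter]
      exact ⟨hj0s, hj0d⟩
    have h2 : j0 ∉ Finset.filter (fun j => D j = d) r.support →
        (C (r.coeff j0).leadingCoeff * X ^ j0).coeff j0 = 0 := by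
      intro h
      exact absurd hj0f h
    rw [Finset.sum_eq_single j0 h1 h2, coeff_C_mul, coeff_X_pow, if_pos rfl, mul_one]
  have hgne : g ≠ 0 := by
    intro h
    rw [h, coeff_zero] at hgj0
    exact (Polynomial.mem_support_iff.1 hj0s)
      (Polynomial.leadingCoeff_eq_zero.1 hgj0.symm)
  have hdegg : g.degree < (p : ℕ) := by
    refine lt_of_le_of_lt (Polynomial.degree_sum_le _ _) ?_
    rw [Finset.sup_lt_iff (by exact_mod_cast WithBot.bot_lt_coe p)]
    intro b hb
    refine lt_of_le_of_lt (degree_C_mul_X_pow_le b _) ?_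
    have hbs : b ∈ r.support := (Finset.mem_filter.1 hb).1
    have hble : b ≤ r.natDegree :=
      Polynomial.le_natDegree_of_ne_zero (Polynomial.mem_support_iff.1 hbs)
    exact_mod_cast lt_of_le_of_lt hble hndeg
  have hmin := pec_minpoly hβp hα
  have hle := minpoly.degree_le_of_ne_zero F α hgne haevg
  rw [hmin, degree_X_pow_sub_C hp.pos] at hle
  exact absurd (lt_of_le_of_lt hle hdegg) (lt_irrefl _)

lemma pec_ker_psi (hβp : ∀ γ : F, γ ^ p ≠ β) (hα : α ^ p = algebraMap F K β)
    (y : Polynomial (Polynomial F)) :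
    pecPsi F K p α y = 0 ↔ pecFF F p β ∣ y := by
  have hp : p.Prime := Fact.out
  have hmonic : (pecFF F p β).Monic := monic_X_pow_sub_C _ hp.ne_zero
  constructor
  · intro h
    rw [← Polynomial.modByMonic_eq_zero_iff_dvd hmonic]
    apply pec_key hβp hα
    · calc (y %ₘ pecFF F p β).degree < (pecFF F p β).degree :=
            degree_modByMonic_lt y hmonic
        _ = (p : ℕ) := degree_X_pow_sub_C hp.pos _
    · have hy := Polynomial.modByMonic_add_div y (pecFF F p β)
      have hc := congrArg (pecPsi F K p α) hy
      rw [map_add, map_mul, pecPsi_FF hα, zero_mul, add_zero] at hc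
      rw [hc, h]
  · rintro ⟨c, rfl⟩
    rw [map_mul, pecPsi_FF hα, zero_mul]

lemma pec_eval_X0 : peculiarEval F K p α (MvPolynomial.X 0) = C α + X := by
  simp [peculiarEval]

lemma pec_eval_X1 : peculiarEval F K p α (MvPolynomial.X 1) = C α * X ^ p := by
  simp [peculiarEval]

lemma pec_eval_CC (a : F) :
    peculiarEval F K p α (MvPolynomial.C a) = C (algebraMap F K a) := by
  simp [peculiarEval, Polynomial.algebraMap_apply]

lemma pec_eval_s (hα : α ^ p = algebraMap F K β) :
    peculiarEval F K p α (MvPolynomial.X 0 ^ p - MvPolynomial.C β) = X ^ p := by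
  haveI : CharP K p := charP_of_injective_algebraMap (algebraMap F K).injective p
  haveI : CharP (Polynomial K) p := inferInstance
  rw [map_sub, map_pow, pec_eval_X0, pec_eval_CC, add_pow_char, ← C_pow, hα]
  ring

end Key

/-- Let `F` be a field of characteristic `p > 0` and `β ∈ F^×` not a `p`-th
power.  Then `t^p − β(x^p − β)^p ∈ F[x,t]` is irreducible, and the quotient
`R' = F[x,t]/(t^p − β(x^p − β)^p)` embeds into `F̃[u]` (where `F̃ = F(β^{1/p})`) via
`x ↦ β^{1/p} + u`, `t ↦ β^{1/p} u^p` (i.e. the kernel of the evaluation map is exactly the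
ideal `(t^p − β(x^p − β)^p)`); this embedding becomes an isomorphism after inverting
`s = x^p − β`, identifying the normalization of `R'` with `F̃[u]`. -/
theorem peculiar_poly_irreducible_ker_localization (F K : Type*) [Field F] [Field K]
    [Algebra F K] (p : ℕ) [Fact p.Prime] [CharP F p]
    (β : F) (hβ : β ≠ 0) (hβp : ∀ γ : F, γ ^ p ≠ β)
    (α : K) (hα : α ^ p = algebraMap F K β)
    (hgen : IntermediateField.adjoin F {α} = ⊤) :
    Irreducible (peculiarPoly F p β) ∧
    RingHom.ker (peculiarEval F K p α).toRingHom = Ideal.span {peculiarPoly F p β} ∧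
    ∀ g : Polynomial K, ∃ (n : ℕ) (r : MvPolynomial (Fin 2) F),
      g * (peculiarEval F K p α (MvPolynomial.X 0 ^ p - MvPolynomial.C β)) ^ n =
        peculiarEval F K p α r := by
  have hp : p.Prime := Fact.out
  -- Part 2: the kernel
  have hker : RingHom.ker (peculiarEval F K p α).toRingHom =
      Ideal.span {peculiarPoly F p β} := by
    ext r
    rw [RingHom.mem_ker, Ideal.mem_span_singleton]
    have : (peculiarEval F K p α).toRingHom r = peculiarEval F K p α r := rfl
    rw [this, peculiarEval_eq, pec_ker_psi hβp hα, ← pecPhi_peculiarPoly (β := β)]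
    constructor
    · intro h
      have h2 := map_dvd (pecPhi F).symm h
      simpa using h2
    · intro h
      exact map_dvd (pecPhi F).toRingHom h
  -- Part 1: irreducibility
  have hf0 : peculiarPoly F p β ≠ 0 := by
    intro h
    have h2 := pecPhi_peculiarPoly (F := F) (p := p) (β := β)
    rw [h, map_zero] at h2
    exact (monic_X_pow_sub_C (Polynomial.C β * (Polynomial.X ^ p - Polynomial.C β) ^ p)
      hp.ne_zero).ne_zero h2.symm
  have hprime : Prime (peculiarPoly F p β) := by
    rw [← Ideal.span_singleton_prime hf0, ← hker]
    exact RingHom.ker_isPrime _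
  refine ⟨hprime.irreducible, hker, ?_⟩
  -- Part 3: localization
  intro g
  set S := (peculiarEval F K p α).range with hS
  have hXp : (Polynomial.X : Polynomial K) ^ p ∈ S :=
    ⟨MvPolynomial.X 0 ^ p - MvPolynomial.C β, pec_eval_s hα⟩
  have hXp1 : (Polynomial.X : Polynomial K) ^ (p + 1) ∈ S := by
    have hcalc : peculiarEval F K p α (MvPolynomial.X 0 *
        (MvPolynomial.X 0 ^ p - MvPolynomial.C β) - MvPolynomial.X 1) = X ^ (p + 1) := by
      rw [map_sub, map_mul, pec_eval_s hα, pec_eval_X0, pec_eval_X1]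
      ring
    exact ⟨_, hcalc⟩
  have hmonpow : ∀ m, p * p ≤ m → (Polynomial.X : Polynomial K) ^ m ∈ S := by
    intro m hm
    obtain ⟨a, ha⟩ : ∃ a, m / p = a + m % p := by
      refine ⟨m / p - m % p, ?_⟩
      have h1 : m % p < p := Nat.mod_lt _ hp.pos
      have h2 : p ≤ m / p := (Nat.le_div_iff_mul_le hp.pos).2 hm
      omega
    have hm' : m = p * a + (p + 1) * (m % p) := by
      have h3 := Nat.div_add_mod m p
      rw [ha] at h3
      have h4 : p * (a + m % p) = p * a + p * (m % p) := by ring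
      have h5 : (p + 1) * (m % p) = p * (m % p) + m % p := by ring
      omega
    rw [hm', pow_add, pow_mul, pow_mul]
    exact S.mul_mem (S.pow_mem hXp a) (S.pow_mem hXp1 (m % p))
  have hαj : ∀ j : ℕ, (Polynomial.C (α ^ j) * Polynomial.X ^ (p * j) : Polynomial K) ∈ S := by
    intro j
    have hcalc : peculiarEval F K p α (MvPolynomial.X 1 ^ j) =
        Polynomial.C (α ^ j) * Polynomial.X ^ (p * j) := by
      rw [map_pow, pec_eval_X1, mul_pow, ← Polynomial.C_pow, ← pow_mul]
    exact ⟨_, hcalc⟩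
  have hc : ∀ (c : K) (m : ℕ), 2 * (p * p) ≤ m →
      (Polynomial.C c * Polynomial.X ^ m : Polynomial K) ∈ S := by
    intro c m hm
    obtain ⟨q0, hq0⟩ : ∃ q0 : Polynomial F, Polynomial.aeval α q0 = c := by
      have halgadj : Algebra.adjoin F {α} = ⊤ := by
        have h1 := IntermediateField.adjoin_simple_toSubalgebra_of_isAlgebraic
          (pec_isIntegral (β := β) hα).isAlgebraic
        rw [hgen, IntermediateField.top_toSubalgebra] at h1
        exact h1.symm
      have hct : c ∈ Algebra.adjoin F {α} := by rw [halgadj]; trivial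
      rw [Algebra.adjoin_singleton_eq_range_aeval] at hct
      exact hct
    set M : Polynomial F := Polynomial.X ^ p - Polynomial.C β with hM
    have hMm : M.Monic := Polynomial.monic_X_pow_sub_C _ hp.ne_zero
    set q : Polynomial F := q0 %ₘ M with hq'
    have hqdeg : q.natDegree < p := by
      by_cases h : q = 0
      · rw [h]; simpa using hp.pos
      · have h1 : q.degree < M.degree := Polynomial.degree_modByMonic_lt q0 hMm
        rw [hM, Polynomial.degree_X_pow_sub_C hp.pos] at h1
        exact (Polynomial.natDegree_lt_iff_degree_lt h).2 h1
    have hq : Polynomial.aeval α q = c := by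
      have h2 := Polynomial.modByMonic_add_div q0 M
      have h3 : Polynomial.aeval α M = 0 := by
        simp [hM, hα, Polynomial.algebraMap_apply]
      calc Polynomial.aeval α q
          = Polynomial.aeval α q + Polynomial.aeval α M *
            Polynomial.aeval α (q0 /ₘ M) := by rw [h3, zero_mul, add_zero]
        _ = Polynomial.aeval α (q0 %ₘ M + M * (q0 /ₘ M)) := by
            rw [map_add, map_mul]
        _ = c := by rw [h2, hq0]
    have hcX : Polynomial.C c * Polynomial.X ^ m =
        ∑ i ∈ Finset.range p, Polynomial.C (algebraMap F K (q.coeff i)) *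
          ((Polynomial.C (α ^ i) * Polynomial.X ^ (p * i)) * Polynomial.X ^ (m - p * i)) := by
      rw [← hq, Polynomial.aeval_eq_sum_range' hqdeg, map_sum, Finset.sum_mul]
      refine Finset.sum_congr rfl fun i hi => ?_
      have hip : i < p := Finset.mem_range.1 hi
      have h5 : p * i ≤ p * p := Nat.mul_le_mul_left p hip.le
      have h6 : p * i + (m - p * i) = m := by omega
      rw [Algebra.smul_def, map_mul]
      calc C (algebraMap F K (q.coeff i)) * C (α ^ i) * X ^ m
          = C (algebraMap F K (q.coeff i)) * (C (α ^ i) * X ^ (p * i + (m - p * i))) := by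
            rw [h6]; ring
        _ = C (algebraMap F K (q.coeff i)) *
            (C (α ^ i) * X ^ (p * i) * X ^ (m - p * i)) := by
            rw [pow_add]; ring
    rw [hcX]
    refine S.sum_mem fun i hi => ?_
    have hip : i < p := Finset.mem_range.1 hi
    have h5 : p * i ≤ p * p := Nat.mul_le_mul_left p hip.le
    have h7 : Polynomial.C (algebraMap F K (q.coeff i)) =
        algebraMap F (Polynomial K) (q.coeff i) := by
      rw [Polynomial.algebraMap_apply]
    rw [h7]
    exact S.mul_mem (S.algebraMap_mem _)
      (S.mul_mem (hαj i) (hmonpow _ (by omega)))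
  refine ⟨2 * p, ?_⟩
  have h1 : (peculiarEval F K p α (MvPolynomial.X 0 ^ p - MvPolynomial.C β)) ^ (2 * p) =
      Polynomial.X ^ (2 * (p * p)) := by
    rw [pec_eval_s hα, ← pow_mul]
    ring_nf
  have h2 : g * Polynomial.X ^ (2 * (p * p)) ∈ S := by
    have hdecomp : g * Polynomial.X ^ (2 * (p * p)) =
        ∑ i ∈ g.support, Polynomial.C (g.coeff i) * Polynomial.X ^ (i + 2 * (p * p)) := by
      conv_lhs => rw [g.as_sum_support]
      rw [Finset.sum_mul]
      refine Finset.sum_congr rfl fun i _ => ?_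
      rw [← Polynomial.C_mul_X_pow_eq_monomial, pow_add]
      ring
    rw [hdecomp]
    exact S.sum_mem fun i _ => hc _ _ (by omega)
  obtain ⟨r, hr⟩ := h2
  exact ⟨r, by rw [h1]; exact hr.symm⟩
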